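/- Let f be monotone submodular normalized, w positive, τ > 0, ε > 0, D ⊆ V, and let G = {e₁,...,e_k} be a sequence where each e_i satisfies d(e_i | {e₁,...,e_{i-1}}) ≥ τ. Suppose τ ≤ f(V)·ε/OPT < (1+ε)τ where OPT is the cost of an optimal cover. Then ∑_{e ∈ G\D} w(e) < ((1+ε)/ε)·OPT. -/
import Mathlib


theorem stmt6 {V : Type*} [Fintype V] [DecidableEq V]
    (f : Finset V → ℝ)
    (hmono : ∀ A B : Finset V, A ⊆ B → f A ≤ f B)
    (hsub : ∀ A B : Finset V, f A + f B ≥ f (A ∪ B) + f (A ∩ B))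
    (hnorm : f ∅ = 0)
    (hV : 0 < f Finset.univ)
    (w : V → ℝ) (hw : ∀ v, 0 < w v)
    (ε : ℝ) (hε0 : 0 < ε) (hε1 : ε < 1/10)
    (τ : ℝ) (hτ : 0 < τ)
    (Sopt : Finset V) (hopt : f Sopt = f Finset.univ)
    (OPT : ℝ) (hOPT : OPT = ∑ v ∈ Sopt, w v) (hOPTpos : 0 < OPT)
    (hτle : τ ≤ f Finset.univ * ε / OPT)
    (hτgt : f Finset.univ * ε / OPT < (1 + ε) * τ)
    (D : Finset V)
    (k : ℕ) (e : ℕ → V)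
    (hinj : Set.InjOn e (Set.Iio k))
    (hdens : ∀ i < k,
      τ ≤ (f ((Finset.range (i + 1)).image e) - f ((Finset.range i).image e)) / w (e i)) :
    ∑ i ∈ (Finset.range k).filter (fun i => e i ∉ D), w (e i) < ((1 + ε) / ε) * OPT := by
  have hstep : ∀ i ∈ Finset.range k,
      τ * w (e i) ≤ f ((Finset.range (i + 1)).image e) - f ((Finset.range i).image e) := by
    intro i hi
    rw [Finset.mem_range] at hi
    have := hdens i hi
    have hwi := hw (e i)
    rw [le_div_iff₀ hwi] at this
    linarith
  have htel : ∑ i ∈ Finset.range k,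
      (f ((Finset.range (i + 1)).image e) - f ((Finset.range i).image e))
      = f ((Finset.range k).image e) - f ((Finset.range 0).image e) :=
    Finset.sum_range_sub (fun i => f ((Finset.range i).image e)) k
  have h1 : τ * ∑ i ∈ Finset.range k, w (e i) ≤ f Finset.univ := by
    rw [Finset.mul_sum]
    calc ∑ i ∈ Finset.range k, τ * w (e i)
        ≤ ∑ i ∈ Finset.range k,
            (f ((Finset.range (i + 1)).image e) - f ((Finset.range i).image e)) :=
          Finset.sum_le_sum hstep
      _ = f ((Finset.range k).image e) - f ((Finset.range 0).image e) := htel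
      _ ≤ f Finset.univ := by
          simp only [Finset.range_zero, Finset.image_empty, hnorm, sub_zero]
          exact hmono _ _ (Finset.subset_univ _)
  have h2 : ∑ i ∈ (Finset.range k).filter (fun i => e i ∉ D), w (e i)
      ≤ ∑ i ∈ Finset.range k, w (e i) :=
    Finset.sum_le_sum_of_subset_of_nonneg (Finset.filter_subset _ _)
      (fun i _ _ => (hw (e i)).le)
  have h3 : f Finset.univ * ε < (1 + ε) * τ * OPT := by
    rw [div_lt_iff₀ hOPTpos] at hτgt
    linarith
  have h4 : ∑ i ∈ Finset.range k, w (e i) < ((1 + ε) / ε) * OPT := by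
    rw [div_mul_eq_mul_div, lt_div_iff₀ hε0]
    nlinarith
  linarith
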